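/- Fix t ∈ ℕ, 0 ≤ β_{1t} < 1, and let F ⊆ ℝ^d be a nonempty closed convex set. Let η_t ∈ ℝ^d have positive coordinates, let m_{t−1}, g_t ∈ ℝ^d, set m_t = β_{1t}·m_{t−1} + (1−β_{1t})·g_t, and let x_t ∈ F. Let x_{t+1} be the minimizer over x ∈ F of ‖η_t^{-1/2} ⊙ (x − (x_t − η_t ⊙ m_t))‖ (the projection of the AdaBound step onto F in the diag(η_t^{-1})-norm). Then for every x* ∈ F: ⟨g_t, x_t − x*⟩ ≤ (1/(2(1−β_{1t})))·[ ‖η_t^{-1/2} ⊙ (x_t − x*)‖² − ‖η_t^{-1/2} ⊙ (x_{t+1} − x*)‖² ] + (1/(2(1−β_{1t})))·‖η_t^{1/2} ⊙ m_t‖² + (β_{1t}/(2(1−β_{1t})))·‖η_t^{1/2} ⊙ m_{t−1}‖² + (β_{1t}/(2(1−β_{1t})))·‖η_t^{-1/2} ⊙ (x_t − x*)‖², where ⊙ is elementwise product, η_t^{±1/2} are elementwise powers, ⟨·,·⟩ the Euclidean inner product, and ‖·‖ the Euclidean norm. -/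
import Mathlib


set_option maxHeartbeats 1000000 in
/-- The per-step inequality in the AdaBound regret analysis: if
`m_t = β_{1t}·m_{t-1} + (1-β_{1t})·g_t` and `x_{t+1}` is the projection of
`x_t - η_t ⊙ m_t` onto `F` in the `diag(η_t⁻¹)`-norm, then for every `x* ∈ F`,
`⟨g_t, x_t - x*⟩` is bounded by the stated combination of weighted squared norms. -/
theorem adabound_per_step_inequality
    (d : ℕ) (t : ℕ) (beta1t : ℝ) (h0 : 0 ≤ beta1t) (h1 : beta1t < 1)
    (F : Set (Fin d → ℝ)) (hFne : F.Nonempty) (hFcl : IsClosed F) (hFcv : Convex ℝ F)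
    (eta : Fin d → ℝ) (heta : ∀ i, 0 < eta i)
    (mprev g mt : Fin d → ℝ)
    (hmt : ∀ i, mt i = beta1t * mprev i + (1 - beta1t) * g i)
    (xt : Fin d → ℝ) (hxt : xt ∈ F)
    (xnext : Fin d → ℝ)
    (hxnextF : xnext ∈ F)
    -- `xnext` minimizes `‖η^{-1/2} ⊙ (x - (x_t - η ⊙ m_t))‖` over `x ∈ F`
    (hxnext : ∀ z ∈ F,
      Real.sqrt (∑ i, ((Real.sqrt (eta i))⁻¹ * (xnext i - (xt i - eta i * mt i))) ^ 2) ≤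
        Real.sqrt (∑ i, ((Real.sqrt (eta i))⁻¹ * (z i - (xt i - eta i * mt i))) ^ 2)) :
    ∀ xs ∈ F,
      ∑ i, g i * (xt i - xs i) ≤
        1 / (2 * (1 - beta1t)) *
            ((∑ i, ((Real.sqrt (eta i))⁻¹ * (xt i - xs i)) ^ 2) -
              ∑ i, ((Real.sqrt (eta i))⁻¹ * (xnext i - xs i)) ^ 2) +
          1 / (2 * (1 - beta1t)) * ∑ i, (Real.sqrt (eta i) * mt i) ^ 2 +
          beta1t / (2 * (1 - beta1t)) * ∑ i, (Real.sqrt (eta i) * mprev i) ^ 2 +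
          beta1t / (2 * (1 - beta1t)) * ∑ i, ((Real.sqrt (eta i))⁻¹ * (xt i - xs i)) ^ 2 := by
  intro xs hxs
  have hb : 0 < 1 - beta1t := by linarith
  have hetane : ∀ i, (eta i : ℝ) ≠ 0 := fun i => (heta i).ne'
  -- rewrite the sqrt-weighted squares as plain weighted squares
  have hsqinv : ∀ (i : Fin d) (u : ℝ),
      ((Real.sqrt (eta i))⁻¹ * u) ^ 2 = (eta i)⁻¹ * u ^ 2 := by
    intro i u
    rw [mul_pow, ← Real.sqrt_inv, Real.sq_sqrt (inv_nonneg.mpr (heta i).le)]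
  have hsqeta : ∀ (i : Fin d) (u : ℝ),
      (Real.sqrt (eta i) * u) ^ 2 = eta i * u ^ 2 := by
    intro i u
    rw [mul_pow, Real.sq_sqrt (heta i).le]
  set y : Fin d → ℝ := fun i => xt i - eta i * mt i with hy
  -- squared form of the minimization property
  have hmin : ∀ z ∈ F,
      ∑ i, (eta i)⁻¹ * (xnext i - y i) ^ 2 ≤ ∑ i, (eta i)⁻¹ * (z i - y i) ^ 2 := by
    intro z hz
    have h := hxnext z hz
    have ha : (0:ℝ) ≤ ∑ i, ((Real.sqrt (eta i))⁻¹ * (xnext i - (xt i - eta i * mt i))) ^ 2 := by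
      positivity
    have hbz : (0:ℝ) ≤ ∑ i, ((Real.sqrt (eta i))⁻¹ * (z i - (xt i - eta i * mt i))) ^ 2 := by
      positivity
    have h2' := mul_self_le_mul_self (Real.sqrt_nonneg _) h
    rw [Real.mul_self_sqrt ha, Real.mul_self_sqrt hbz] at h2'
    simpa only [hsqinv] using h2'
  -- obtuse angle property
  set A : ℝ := ∑ i, (eta i)⁻¹ * ((xnext i - y i) * (xs i - xnext i)) with hA
  set B : ℝ := ∑ i, (eta i)⁻¹ * (xs i - xnext i) ^ 2 with hB
  have hBnn : 0 ≤ B := by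
    apply Finset.sum_nonneg; intro i _
    exact mul_nonneg (inv_nonneg.mpr (heta i).le) (sq_nonneg _)
  have hobtuse : 0 ≤ A := by
    by_contra hAneg
    push_neg at hAneg
    have hBpos : 0 < B := by
      rcases lt_or_eq_of_le hBnn with h | h
      · exact h
      · exfalso
        -- B = 0 forces xs = xnext, hence A = 0
        have hzero : ∀ i ∈ Finset.univ, (eta i)⁻¹ * (xs i - xnext i) ^ 2 = 0 := by
          have := (Finset.sum_eq_zero_iff_of_nonneg
            (fun i _ => mul_nonneg (inv_nonneg.mpr (heta i).le) (sq_nonneg _) :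
              ∀ i ∈ Finset.univ, (0:ℝ) ≤ (eta i)⁻¹ * (xs i - xnext i) ^ 2)).mp h.symm
          exact this
        have hxszero : ∀ i, xs i - xnext i = 0 := by
          intro i
          have := hzero i (Finset.mem_univ i)
          have hinv : (eta i)⁻¹ ≠ 0 := inv_ne_zero (hetane i)
          have := (mul_eq_zero.mp this).resolve_left hinv
          exact pow_eq_zero_iff (n := 2) (by norm_num) |>.mp this
        have : A = 0 := by
          rw [hA]
          apply Finset.sum_eq_zero
          intro i _
          rw [hxszero i]; ring
        linarith
    set s : ℝ := min 1 (-A / B) with hs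
    have hspos : 0 < s := lt_min one_pos (div_pos (by linarith) hBpos)
    have hsle1 : s ≤ 1 := min_le_left _ _
    have hsleAB : s ≤ -A / B := min_le_right _ _
    -- the convex combination point
    set q : Fin d → ℝ := fun i => xnext i + s * (xs i - xnext i) with hq
    have hqF : q ∈ F := by
      have hmem := hFcv hxnextF hxs (by linarith : (0:ℝ) ≤ 1 - s) hspos.le (by ring)
      have hq' : q = (1 - s) • xnext + s • xs := by
        funext i
        simp only [hq, Pi.add_apply, Pi.smul_apply, smul_eq_mul]
        ring
      rwa [← hq'] at hmem
    have hexp : ∑ i, (eta i)⁻¹ * (q i - y i) ^ 2 =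
        (∑ i, (eta i)⁻¹ * (xnext i - y i) ^ 2) + 2 * s * A + s ^ 2 * B := by
      rw [hA, hB, Finset.mul_sum, Finset.mul_sum, ← Finset.sum_add_distrib,
        ← Finset.sum_add_distrib]
      apply Finset.sum_congr rfl
      intro i _
      simp only [hq]
      ring
    have hle := hmin q hqF
    rw [hexp] at hle
    have h2 : 0 ≤ 2 * s * A + s ^ 2 * B := by linarith
    have hsB : s * B ≤ -A := by
      rw [le_div_iff₀ hBpos] at hsleAB
      linarith
    have h3 : s * (s * B) ≤ s * (-A) := mul_le_mul_of_nonneg_left hsB hspos.le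
    have h4 : s * A < 0 := mul_neg_of_pos_of_neg hspos hAneg
    nlinarith
  -- nonexpansiveness: ‖xnext - xs‖_w² ≤ ‖y - xs‖_w²
  set S1 : ℝ := ∑ i, (eta i)⁻¹ * (xt i - xs i) ^ 2 with hS1
  set S2 : ℝ := ∑ i, (eta i)⁻¹ * (xnext i - xs i) ^ 2 with hS2
  have hne : S2 ≤ ∑ i, (eta i)⁻¹ * (y i - xs i) ^ 2 := by
    have hid : ∑ i, (eta i)⁻¹ * (y i - xs i) ^ 2 =
        S2 + (∑ i, (eta i)⁻¹ * (xnext i - y i) ^ 2) + 2 * A := by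
      rw [hS2, hA, Finset.mul_sum, ← Finset.sum_add_distrib, ← Finset.sum_add_distrib]
      apply Finset.sum_congr rfl
      intro i _
      ring
    have hnn : 0 ≤ ∑ i, (eta i)⁻¹ * (xnext i - y i) ^ 2 := by
      apply Finset.sum_nonneg; intro i _
      exact mul_nonneg (inv_nonneg.mpr (heta i).le) (sq_nonneg _)
    linarith
  -- expansion of ‖y - xs‖_w²
  have hexp2 : ∑ i, (eta i)⁻¹ * (y i - xs i) ^ 2 =
      S1 - 2 * (∑ i, mt i * (xt i - xs i)) + ∑ i, eta i * (mt i) ^ 2 := by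
    rw [hS1, Finset.mul_sum, ← Finset.sum_sub_distrib, ← Finset.sum_add_distrib]
    apply Finset.sum_congr rfl
    intro i _
    have he : (eta i)⁻¹ * eta i = 1 := inv_mul_cancel₀ (hetane i)
    simp only [hy]
    linear_combination (eta i * mt i ^ 2 - 2 * mt i * (xt i - xs i)) * he
  have hkey1 : S2 ≤ S1 - 2 * (∑ i, mt i * (xt i - xs i)) + ∑ i, eta i * (mt i) ^ 2 := by
    rw [← hexp2]; exact hne
  -- Young's inequality termwise
  have hyoung : ∑ i, mprev i * (xs i - xt i) ≤
      (1/2) * (∑ i, eta i * (mprev i) ^ 2) + (1/2) * S1 := by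
    rw [hS1, Finset.mul_sum, Finset.mul_sum, ← Finset.sum_add_distrib]
    apply Finset.sum_le_sum
    intro i _
    have he : (eta i)⁻¹ * eta i = 1 := inv_mul_cancel₀ (hetane i)
    have hp := heta i
    nlinarith [sq_nonneg (eta i * mprev i - (xs i - xt i)), sq_nonneg (xs i - xt i),
      mul_pos hp hp]
  -- relate mt sum to g and mprev sums
  have hmtsum : ∑ i, mt i * (xt i - xs i) =
      beta1t * (∑ i, mprev i * (xt i - xs i)) +
        (1 - beta1t) * (∑ i, g i * (xt i - xs i)) := by
    rw [Finset.mul_sum, Finset.mul_sum, ← Finset.sum_add_distrib]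
    apply Finset.sum_congr rfl
    intro i _
    rw [hmt i]; ring
  have hflip : ∑ i, mprev i * (xs i - xt i) = -(∑ i, mprev i * (xt i - xs i)) := by
    rw [← Finset.sum_neg_distrib]
    apply Finset.sum_congr rfl
    intro i _; ring
  -- combine
  set G : ℝ := ∑ i, g i * (xt i - xs i) with hG
  set P : ℝ := ∑ i, mprev i * (xt i - xs i) with hP
  set Tmt : ℝ := ∑ i, eta i * (mt i) ^ 2 with hTmt
  set Tpr : ℝ := ∑ i, eta i * (mprev i) ^ 2 with hTpr
  have hkey : 2 * (1 - beta1t) * G ≤ (S1 - S2) + Tmt + beta1t * Tpr + beta1t * S1 := by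
    have hY : -P ≤ (1/2) * Tpr + (1/2) * S1 := by rw [hflip] at hyoung; linarith
    have hM : beta1t * P + (1 - beta1t) * G ≤ (S1 - S2) / 2 + Tmt / 2 := by
      rw [← hmtsum]; linarith
    nlinarith [mul_le_mul_of_nonneg_left hY h0]
  -- convert the goal into the weighted-square notation
  have hgoal : (∑ i, ((Real.sqrt (eta i))⁻¹ * (xt i - xs i)) ^ 2) = S1 := by
    rw [hS1]; exact Finset.sum_congr rfl fun i _ => hsqinv i _
  have hgoal2 : (∑ i, ((Real.sqrt (eta i))⁻¹ * (xnext i - xs i)) ^ 2) = S2 := by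
    rw [hS2]; exact Finset.sum_congr rfl fun i _ => hsqinv i _
  have hgoal3 : (∑ i, (Real.sqrt (eta i) * mt i) ^ 2) = Tmt := by
    rw [hTmt]; exact Finset.sum_congr rfl fun i _ => hsqeta i _
  have hgoal4 : (∑ i, (Real.sqrt (eta i) * mprev i) ^ 2) = Tpr := by
    rw [hTpr]; exact Finset.sum_congr rfl fun i _ => hsqeta i _
  rw [hgoal, hgoal2, hgoal3, hgoal4]
  have h2b : (0:ℝ) < 2 * (1 - beta1t) := by linarith
  have hfinal : G ≤ ((S1 - S2) + Tmt + beta1t * Tpr + beta1t * S1) / (2 * (1 - beta1t)) := by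
    rw [le_div_iff₀ h2b]
    nlinarith [hkey]
  have heqr : 1 / (2 * (1 - beta1t)) * (S1 - S2) + 1 / (2 * (1 - beta1t)) * Tmt +
      beta1t / (2 * (1 - beta1t)) * Tpr + beta1t / (2 * (1 - beta1t)) * S1 =
      ((S1 - S2) + Tmt + beta1t * Tpr + beta1t * S1) / (2 * (1 - beta1t)) := by
    field_simp
  rw [heqr]
  exact hfinal
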